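/- Let λ be a real number with cos(πλ) = cos²(π/8) = (1/2)(1 + 1/√2). Then λ is irrational. -/

import Mathlib

open Polynomial Complex

/-- If `cos(πλ) = (1/2)(1 + 1/√2) = cos²(π/8)`, then `λ` is irrational. -/
theorem stmt7 (l : ℝ)
    (hl : Real.cos (Real.pi * l) = (1 / 2) * (1 + 1 / Real.sqrt 2)) :
    Irrational l := by
  by_contra h
  rw [Irrational] at h
  obtain ⟨q, hq⟩ := not_not.mp h
  subst hq
  set z : ℂ := Complex.exp ((q : ℂ) * Real.pi * Complex.I) with hz
  have hden : (q.den : ℂ) * (q : ℂ) = (q.num : ℂ) := by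
    have := Rat.mul_den_eq_num q
    exact_mod_cast by rw [mul_comm]; exact_mod_cast congrArg (fun x : ℚ => (x : ℂ)) this
  have h1 : z ^ (2 * q.den) = 1 := by
    rw [hz, ← Complex.exp_nat_mul]
    have : (↑(2 * q.den) : ℂ) * ((q : ℂ) * Real.pi * Complex.I)
        = (q.num : ℂ) * (2 * Real.pi * Complex.I) := by
      push_cast
      rw [← hden]; ring
    rw [this]
    exact Complex.exp_int_mul_two_pi_mul_I _
  have hz0 : z ≠ 0 := Complex.exp_ne_zero _
  have h2 : IsIntegral ℤ z := by
    refine ⟨X ^ (2 * q.den) - 1, ?_, ?_⟩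
    · exact monic_X_pow_sub_C 1 (by positivity)
    · simp [h1]
  have hinv : z⁻¹ = z ^ (2 * q.den - 1) := by
    have h2d : 2 * q.den - 1 + 1 = 2 * q.den := by
      have := q.den_pos; omega
    field_simp
    rw [← pow_succ', h2d, h1]
  have h3 : IsIntegral ℤ z⁻¹ := by
    rw [hinv]; exact h2.pow _
  have h4 : IsIntegral ℤ (z + z⁻¹) := h2.add h3
  have h5 : z + z⁻¹ = 1 + (Real.sqrt 2 : ℂ)⁻¹ := by
    have : z + z⁻¹ = 2 * Complex.cos ((q : ℂ) * Real.pi) := by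
      rw [hz, ← Complex.exp_neg, Complex.two_cos]
      ring_nf
    rw [this]
    have : ((q : ℂ) * Real.pi) = ((Real.pi * q : ℝ) : ℂ) := by push_cast; ring
    rw [this, ← Complex.ofReal_cos, hl]
    push_cast
    ring
  rw [h5] at h4
  have hs2 : (Real.sqrt 2 : ℂ) * (Real.sqrt 2 : ℂ) = 2 := by
    norm_cast
    rw [Real.mul_self_sqrt (by norm_num)]
  have hs0 : (Real.sqrt 2 : ℂ) ≠ 0 := by
    intro hc
    rw [hc, mul_zero] at hs2
    norm_num at hs2
  have key : ((-1/2 : ℚ) : ℂ) =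
      (1 + (Real.sqrt 2 : ℂ)⁻¹) * (1 + (Real.sqrt 2 : ℂ)⁻¹) - 2 * (1 + (Real.sqrt 2 : ℂ)⁻¹) := by
    have hsi : (Real.sqrt 2 : ℂ)⁻¹ * (Real.sqrt 2 : ℂ)⁻¹ = 1/2 := by
      rw [← mul_inv, hs2]
      norm_num
    push_cast
    linear_combination -hsi
  have h6 : IsIntegral ℤ ((-1/2 : ℚ) : ℂ) := by
    rw [key]
    exact (h4.mul h4).sub ((isIntegral_algebraMap (x := (2:ℤ))).mul h4)
  rw [show ((-1/2 : ℚ) : ℂ) = algebraMap ℚ ℂ (-1/2) from rfl] at h6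
  rw [isIntegral_algebraMap_iff (algebraMap ℚ ℂ).injective] at h6
  obtain ⟨n, hn⟩ := IsIntegrallyClosed.isIntegral_iff.mp h6
  have : ((2 * n : ℤ) : ℚ) = -1 := by push_cast; rw [show ((n:ℚ)) = algebraMap ℤ ℚ n from rfl, hn]; ring
  have : (2 * n : ℤ) = -1 := by exact_mod_cast this
  omega
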